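/- Let p ∈ (1,2), set κ := (p-1)^{-p}, and let a > 0. Let ψ(·,a) be the function associated with the unique solution f(·,a) of (|f'|^{p-2} f')' + f - |f'|^{p-1} = 0, f(0) = a, f'(0) = 0, via ψ(1-f(r,a)/a, a) = |f'(r,a)|^p/a^p, and define φ(y,a) := ψ(y,a)(1-y)^{-p} for y ∈ [0,1). Then the following four statements are equivalent: (i) φ(y,a) → 0 as y → 1; (ii) sup_{y ∈ [0,1)} φ(y,a) < κ; (iii) the derivative φ'(·,a) vanishes at least once in (0,1); (iv) there exists Y_a ∈ (0,1) such that φ'(Y_a,a) = 0 and φ'(y,a)(y-Y_a) < 0 for all y ∈ (0,1) \ {Y_a}. -/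

import Mathlib

open Set Filter Topology

/-- The extinction "radius" `R = inf{r > 0 : f(r) = 0}`, as an extended real number
(`⊤` when `f` does not vanish on `(0,∞)`). -/
noncomputable def extTime (f : ℝ → ℝ) : EReal :=
  sInf {x : EReal | ∃ r : ℝ, 0 < r ∧ f r = 0 ∧ x = (r : EReal)}

/-- `f` solves `(|f'|^{p-2} f')' + f - |f'|^{p-1} = 0` on `(0,∞)` with `f(0)=a`, `f'(0)=0`;
`fd` is the derivative of `f` and `gd` the derivative of `|f'|^{p-2} f'`, both continuous
on `[0,∞)`, so that `f ∈ C¹([0,∞))` and `|f'|^{p-2} f' ∈ C¹([0,∞))`. -/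
def IsSol (p a : ℝ) (f fd gd : ℝ → ℝ) : Prop :=
  (∀ r ∈ Set.Ici (0:ℝ), HasDerivWithinAt f (fd r) (Set.Ici 0) r) ∧
  ContinuousOn fd (Set.Ici 0) ∧
  (∀ r ∈ Set.Ici (0:ℝ), HasDerivWithinAt (fun s => |fd s| ^ (p-2) * fd s) (gd r) (Set.Ici 0) r) ∧
  ContinuousOn gd (Set.Ici 0) ∧
  (∀ r ∈ Set.Ioi (0:ℝ), gd r + f r - |fd r| ^ (p-1) = 0) ∧
  f 0 = a ∧ fd 0 = 0

/-- `ψ` is the function associated with `f = f(·,a)` via `ψ(1 - f(r)/a) = |f'(r)|^p/a^p`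
for `r ∈ [0,R(a))`. -/
def PsiRel (p a : ℝ) (f fd ψ : ℝ → ℝ) : Prop :=
  ∀ r : ℝ, 0 ≤ r → (r : EReal) < extTime f → ψ (1 - f r / a) = |fd r| ^ p / a ^ p

/-- `ψ : [0,1) → [0,∞)` is continuously differentiable (with derivative `ψd`), `ψ(0) = 0`,
and `ψ' + (p/(p-1)) ψ^{(p-1)/p} = (p a^{2-p}/(p-1))(1-y)` holds on `(0,1)`. -/
def PsiSol (p a : ℝ) (ψ ψd : ℝ → ℝ) : Prop :=
  (∀ y ∈ Set.Ico (0:ℝ) 1, HasDerivWithinAt ψ (ψd y) (Set.Ico 0 1) y) ∧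
  ContinuousOn ψd (Set.Ico 0 1) ∧
  (∀ y ∈ Set.Ico (0:ℝ) 1, 0 ≤ ψ y) ∧
  ψ 0 = 0 ∧
  (∀ y ∈ Set.Ioo (0:ℝ) 1,
    ψd y + (p/(p-1)) * ψ y ^ ((p-1)/p) = (p * a ^ (2-p) / (p-1)) * (1-y))

noncomputable def Phi (p : ℝ) (ψ : ℝ → ℝ) (y : ℝ) : ℝ := ψ y * (1-y) ^ (-p)
noncomputable def Phid (p : ℝ) (ψ ψd : ℝ → ℝ) (y : ℝ) : ℝ :=
  ψd y * (1-y) ^ (-p) + p * ψ y * (1-y) ^ (-(p+1))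
noncomputable def Hw (p t : ℝ) : ℝ := (p-1)⁻¹ * t ^ ((p-1)/p) - t
noncomputable def Ee (p a : ℝ) (ψ : ℝ → ℝ) (y : ℝ) : ℝ :=
  p * a ^ (2-p) / (p-1) * (1-y) ^ (2-p) - p * Hw p (Phi p ψ y)

section basics
variable {p a : ℝ} {ψ ψd : ℝ → ℝ}

lemma Cpos (hp : p ∈ Set.Ioo (1:ℝ) 2) (ha : 0 < a) : 0 < p * a ^ (2-p) / (p-1) := by
  have h1 : (0:ℝ) < p - 1 := by linarith [hp.1]
  have hp0 : (0:ℝ) < p := by linarith [hp.1]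
  have h2 : (0:ℝ) < a ^ (2-p) := Real.rpow_pos_of_pos ha _
  positivity

lemma kappa_pos (hp : p ∈ Set.Ioo (1:ℝ) 2) : 0 < (p-1) ^ (-p) :=
  Real.rpow_pos_of_pos (by linarith [hp.1]) _

lemma hw_zero (hp : p ∈ Set.Ioo (1:ℝ) 2) : Hw p 0 = 0 := by
  have h : ((p-1)/p) ≠ 0 := ne_of_gt (by apply div_pos <;> linarith [hp.1])
  simp [Hw, Real.zero_rpow h]

lemma hw_factor (hp : p ∈ Set.Ioo (1:ℝ) 2) {t : ℝ} (ht : 0 < t) :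
    Hw p t = t ^ ((p-1)/p) * ((p-1)⁻¹ - t ^ (p⁻¹)) := by
  have hp0 : (0:ℝ) < p := by linarith [hp.1]
  have h : t ^ ((p-1)/p) * t ^ (p⁻¹) = t := by
    rw [← Real.rpow_add ht]
    have : (p-1)/p + p⁻¹ = 1 := by field_simp; ring
    rw [this, Real.rpow_one]
  unfold Hw; nlinarith [h]

lemma kappa_rpow_inv (hp : p ∈ Set.Ioo (1:ℝ) 2) :
    ((p-1) ^ (-p)) ^ (p⁻¹) = (p-1)⁻¹ := by
  have h1 : (0:ℝ) < p - 1 := by linarith [hp.1]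
  have hp0 : (0:ℝ) ≠ p := ne_of_lt (by linarith [hp.1])
  rw [← Real.rpow_mul h1.le]
  have : -p * p⁻¹ = -1 := by field_simp
  rw [this, Real.rpow_neg_one]

lemma hw_pos (hp : p ∈ Set.Ioo (1:ℝ) 2) {t : ℝ} (ht : 0 < t) (ht2 : t < (p-1) ^ (-p)) :
    0 < Hw p t := by
  have h1 : (0:ℝ) < p - 1 := by linarith [hp.1]
  have hp0 : (0:ℝ) < p := by linarith [hp.1]
  have h2 : t ^ (p⁻¹) < (p-1)⁻¹ := by
    calc t ^ (p⁻¹) < ((p-1) ^ (-p)) ^ (p⁻¹) := Real.rpow_lt_rpow ht.le ht2 (by positivity)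
    _ = (p-1)⁻¹ := kappa_rpow_inv hp
  rw [hw_factor hp ht]
  have : (0:ℝ) < t ^ ((p-1)/p) := Real.rpow_pos_of_pos ht _
  nlinarith

lemma hw_nonpos (hp : p ∈ Set.Ioo (1:ℝ) 2) {t : ℝ} (ht2 : (p-1) ^ (-p) ≤ t) :
    Hw p t ≤ 0 := by
  have h1 : (0:ℝ) < p - 1 := by linarith [hp.1]
  have hp0 : (0:ℝ) < p := by linarith [hp.1]
  have ht : 0 < t := lt_of_lt_of_le (kappa_pos hp) ht2
  have h2 : (p-1)⁻¹ ≤ t ^ (p⁻¹) := by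
    calc (p-1)⁻¹ = ((p-1) ^ (-p)) ^ (p⁻¹) := (kappa_rpow_inv hp).symm
    _ ≤ t ^ (p⁻¹) := Real.rpow_le_rpow (kappa_pos hp).le ht2 (by positivity)
  rw [hw_factor hp ht]
  have : (0:ℝ) < t ^ ((p-1)/p) := Real.rpow_pos_of_pos ht _
  nlinarith

lemma hw_kappa (hp : p ∈ Set.Ioo (1:ℝ) 2) : Hw p ((p-1) ^ (-p)) = 0 := by
  rw [hw_factor hp (kappa_pos hp), kappa_rpow_inv hp]
  ring

lemma phi_of_pos_lt (hp : p ∈ Set.Ioo (1:ℝ) 2) {t : ℝ} (ht0 : 0 ≤ t) (ht : 0 < Hw p t) :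
    0 < t ∧ t < (p-1) ^ (-p) := by
  constructor
  · rcases eq_or_lt_of_le ht0 with h | h
    · exfalso; rw [← h, hw_zero hp] at ht; exact lt_irrefl 0 ht
    · exact h
  · by_contra h
    exact absurd ht (not_lt.2 (hw_nonpos hp (not_lt.1 h)))

end basics

lemma hasDeriv_one_sub_rpow (r : ℝ) {y : ℝ} (hy : y < 1) :
    HasDerivAt (fun x : ℝ => (1-x) ^ r) (-r * (1-y) ^ (r-1)) y := by
  have h : HasDerivAt (fun x : ℝ => 1 - x) (-1) y := (hasDerivAt_id y).const_sub 1
  have h2 := (Real.hasDerivAt_rpow_const (p := r) (Or.inl (ne_of_gt (by linarith)))).comp y h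
  exact h2.congr_deriv (by ring)

lemma cont_one_sub_rpow (r : ℝ) : ContinuousOn (fun y : ℝ => (1-y) ^ r) (Set.Ico 0 1) := by
  apply ContinuousOn.rpow_const
  · exact continuousOn_const.sub continuousOn_id
  · intro x hx
    exact Or.inl (ne_of_gt (by simp at hx; linarith [hx.2]))

section derivs
variable {p a : ℝ} {ψ ψd : ℝ → ℝ}

lemma psi_cont (hψ : PsiSol p a ψ ψd) : ContinuousOn ψ (Set.Ico 0 1) :=
  fun y hy => (hψ.1 y hy).continuousWithinAt

lemma phi_cont (hψ : PsiSol p a ψ ψd) : ContinuousOn (Phi p ψ) (Set.Ico 0 1) :=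
  (psi_cont hψ).mul (cont_one_sub_rpow (-p))

lemma phid_cont (hψ : PsiSol p a ψ ψd) : ContinuousOn (Phid p ψ ψd) (Set.Ico 0 1) := by
  apply ContinuousOn.add
  · exact hψ.2.1.mul (cont_one_sub_rpow (-p))
  · exact (continuousOn_const.mul (psi_cont hψ)).mul (cont_one_sub_rpow (-(p+1)))

lemma phi_nonneg (hψ : PsiSol p a ψ ψd) {y : ℝ} (hy : y ∈ Set.Ico (0:ℝ) 1) :
    0 ≤ Phi p ψ y := by
  have h1 : (0:ℝ) < 1 - y := by linarith [hy.2]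
  exact mul_nonneg (hψ.2.2.1 y hy) (Real.rpow_pos_of_pos h1 _).le

lemma phi_zero (hψ : PsiSol p a ψ ψd) : Phi p ψ 0 = 0 := by
  simp [Phi, hψ.2.2.2.1]

lemma phi_hasDerivWithinAt (hψ : PsiSol p a ψ ψd) {y : ℝ} (hy : y ∈ Set.Ico (0:ℝ) 1) :
    HasDerivWithinAt (Phi p ψ) (Phid p ψ ψd y) (Set.Ico 0 1) y := by
  have h1 : (0:ℝ) < 1 - y := by linarith [hy.2]
  have hg := (hasDeriv_one_sub_rpow (-p) hy.2).hasDerivWithinAt (s := Set.Ico (0:ℝ) 1)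
  have hprod := (hψ.1 y hy).mul hg
  have he : -(p+1) = -p - 1 := by ring
  exact hprod.congr_deriv (by unfold Phid; rw [he]; ring)

lemma phi_hasDerivAt (hψ : PsiSol p a ψ ψd) {y : ℝ} (hy : y ∈ Set.Ioo (0:ℝ) 1) :
    HasDerivAt (Phi p ψ) (Phid p ψ ψd y) y :=
  (phi_hasDerivWithinAt hψ (Set.Ioo_subset_Ico_self hy)).hasDerivAt
    (Ico_mem_nhds hy.1 hy.2)

lemma psid_zero (hp : p ∈ Set.Ioo (1:ℝ) 2) (ha : 0 < a) (hψ : PsiSol p a ψ ψd) :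
    ψd 0 = p * a ^ (2-p) / (p-1) := by
  have h0 : (0:ℝ) ∈ Set.Ico (0:ℝ) 1 := ⟨le_refl 0, one_pos⟩
  have hmem : Set.Ioo (0:ℝ) 1 ∈ 𝓝[>] (0:ℝ) := Ioo_mem_nhdsGT one_pos
  have hle : 𝓝[>] (0:ℝ) ≤ 𝓝[Set.Ico (0:ℝ) 1] 0 :=
    nhdsWithin_le_of_mem (mem_of_superset hmem Set.Ioo_subset_Ico_self)
  have h1 : Tendsto ψd (𝓝[>] (0:ℝ)) (𝓝 (ψd 0)) :=
    ((hψ.2.1 0 h0).mono_left hle)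
  have hψt : Tendsto ψ (𝓝[>] (0:ℝ)) (𝓝 0) := by
    have := ((hψ.1 0 h0).continuousWithinAt.mono_left hle)
    rwa [hψ.2.2.2.1] at this
  have hβ : ((p-1)/p) ≠ 0 := ne_of_gt (by apply div_pos <;> linarith [hp.1])
  have hrpow : Tendsto (fun y => ψ y ^ ((p-1)/p)) (𝓝[>] (0:ℝ)) (𝓝 0) := by
    have hc : ContinuousAt (fun t : ℝ => t ^ ((p-1)/p)) 0 := by
      apply Real.continuousAt_rpow_const
      right
      apply div_nonneg <;> linarith [hp.1]
    have := hc.tendsto.comp hψt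
    rwa [Real.zero_rpow hβ] at this
  have h2 : Tendsto (fun y => p * a ^ (2-p) / (p-1) * (1-y) - (p/(p-1)) * ψ y ^ ((p-1)/p))
      (𝓝[>] (0:ℝ)) (𝓝 (p * a ^ (2-p) / (p-1))) := by
    have hlin : Tendsto (fun y : ℝ => p * a ^ (2-p) / (p-1) * (1-y)) (𝓝[>] (0:ℝ))
        (𝓝 (p * a ^ (2-p) / (p-1))) := by
      have : ContinuousAt (fun y : ℝ => p * a ^ (2-p) / (p-1) * (1-y)) 0 := by fun_prop
      have h3 := this.tendsto.mono_left (nhdsWithin_le_nhds (s := Set.Ioi (0:ℝ)))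
      simpa using h3
    have := hlin.sub ((hrpow.const_mul (p/(p-1))))
    simpa using this
  have heq : ψd =ᶠ[𝓝[>] (0:ℝ)] fun y => p * a ^ (2-p) / (p-1) * (1-y) - (p/(p-1)) * ψ y ^ ((p-1)/p) := by
    filter_upwards [hmem] with y hy
    have := hψ.2.2.2.2 y hy
    linarith
  exact tendsto_nhds_unique (h1.congr' heq) h2

lemma phid_zero_val (hp : p ∈ Set.Ioo (1:ℝ) 2) (ha : 0 < a) (hψ : PsiSol p a ψ ψd) :
    Phid p ψ ψd 0 = p * a ^ (2-p) / (p-1) := by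
  unfold Phid
  rw [psid_zero hp ha hψ, hψ.2.2.2.1]
  simp

lemma key_id (hp : p ∈ Set.Ioo (1:ℝ) 2) (ha : 0 < a) (hψ : PsiSol p a ψ ψd)
    {y : ℝ} (hy : y ∈ Set.Ioo (0:ℝ) 1) :
    Phid p ψ ψd y * (1-y) = Ee p a ψ y := by
  have hyI : y ∈ Set.Ico (0:ℝ) 1 := Set.Ioo_subset_Ico_self hy
  have hs : (0:ℝ) < 1 - y := by linarith [hy.2]
  have hp0 : (0:ℝ) < p := by linarith [hp.1]
  have hp1 : (0:ℝ) < p - 1 := by linarith [hp.1]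
  have hψn : 0 ≤ ψ y := hψ.2.2.1 y hyI
  have hode := hψ.2.2.2.2 y hy
  have hψd : ψd y = p * a ^ (2-p) / (p-1) * (1-y) - (p/(p-1)) * ψ y ^ ((p-1)/p) := by linarith
  have hmul : ∀ r : ℝ, (1-y) ^ r * (1-y) = (1-y) ^ (r+1) := by
    intro r
    calc (1-y)^r * (1-y) = (1-y)^r * (1-y)^(1:ℝ) := by rw [Real.rpow_one]
    _ = (1-y)^(r+1) := (Real.rpow_add hs r 1).symm
  have hA : (1-y) ^ (-(p+1)) * (1-y) = (1-y) ^ (-p) := by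
    rw [hmul]; norm_num
  have hB : (1-y) ^ (-p) * (1-y) = (1-y) ^ (1-p) := by
    rw [hmul]; ring_nf
  have hC : (1-y) * (1-y) ^ (1-p) = (1-y) ^ (2-p) := by
    rw [mul_comm, hmul]; ring_nf
  have e1 : (Phi p ψ y) ^ ((p-1)/p) = ψ y ^ ((p-1)/p) * (1-y) ^ (1-p) := by
    unfold Phi
    have hpne : p ≠ 0 := ne_of_gt hp0
    have hexp : -p * ((p-1)/p) = 1 - p := by field_simp; ring
    rw [Real.mul_rpow hψn (Real.rpow_pos_of_pos hs _).le, ← Real.rpow_mul hs.le, hexp]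
  calc Phid p ψ ψd y * (1-y)
      = ψd y * ((1-y)^(-p) * (1-y)) + (p * ψ y) * ((1-y)^(-(p+1)) * (1-y)) := by
        unfold Phid; ring
    _ = ψd y * (1-y)^(1-p) + p * ψ y * (1-y)^(-p) := by rw [hA, hB]
    _ = (p * a^(2-p)/(p-1)) * ((1-y) * (1-y)^(1-p))
        - (p/(p-1)) * (ψ y ^ ((p-1)/p) * (1-y)^(1-p)) + p * ψ y * (1-y)^(-p) := by
        rw [hψd]; ring
    _ = (p * a^(2-p)/(p-1)) * (1-y)^(2-p)
        - (p/(p-1)) * (Phi p ψ y) ^ ((p-1)/p) + p * (Phi p ψ y) := by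
        rw [hC, e1]; unfold Phi; ring
    _ = Ee p a ψ y := by unfold Ee Hw; ring

end derivs

lemma no_upcross {E : ℝ → ℝ} {u v : ℝ} (huv : u < v) (hc : ContinuousOn E (Set.Icc u v))
    (hcross : ∀ z ∈ Set.Icc u v, E z = 0 → ∀ᶠ y in 𝓝[<] z, 0 < E y)
    (hu : E u < 0) (hv : 0 < E v) : False := by
  set S := {y ∈ Set.Icc u v | 0 ≤ E y} with hS
  have hSclosed : IsClosed S := by
    have : S = Set.Icc u v ∩ E ⁻¹' (Set.Ici 0) := rfl
    rw [this]
    exact ContinuousOn.preimage_isClosed_of_isClosed hc isClosed_Icc isClosed_Ici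
  have hvS : v ∈ S := ⟨⟨huv.le, le_refl v⟩, hv.le⟩
  have hSbdd : BddBelow S := ⟨u, fun y hy => hy.1.1⟩
  set z := sInf S with hz
  have hzS : z ∈ S := hSclosed.csInf_mem ⟨v, hvS⟩ hSbdd
  have hz_u : u < z := by
    rcases eq_or_lt_of_le hzS.1.1 with h | h
    · exfalso; rw [← h] at hzS; exact absurd hzS.2 (not_le.2 hu)
    · exact h
  have hneg : ∀ y ∈ Set.Ico u z, E y < 0 := by
    intro y hy
    by_contra h
    have hyS : y ∈ S := ⟨⟨hy.1, le_trans hy.2.le hzS.1.2⟩, not_lt.1 h⟩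
    exact absurd (csInf_le hSbdd hyS) (not_le.2 hy.2)
  have hEz : E z = 0 := by
    refine le_antisymm ?_ hzS.2
    have hcw : Tendsto E (𝓝[Set.Ico u z] z) (𝓝 (E z)) := by
      apply (hc z hzS.1).mono
      intro y hy
      exact ⟨hy.1, le_trans hy.2.le hzS.1.2⟩
    have hne : (𝓝[Set.Ico u z] z).NeBot := by
      apply mem_closure_iff_nhdsWithin_neBot.mp
      rw [closure_Ico (ne_of_lt hz_u)]
      exact ⟨hz_u.le, le_refl z⟩
    exact le_of_tendsto hcw (eventually_mem_nhdsWithin.mono (fun y hy => (hneg y hy).le))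
  have hev := hcross z hzS.1 hEz
  have hmem : Set.Ioo u z ∈ 𝓝[<] z := Ioo_mem_nhdsLT hz_u
  obtain ⟨y, hy1, hy2⟩ := (hev.and (eventually_of_mem hmem (fun y hy => hy))).exists
  exact absurd (hneg y ⟨hy2.1.le, hy2.2⟩) (not_lt.2 hy1.le)

section cross
variable {p a : ℝ} {ψ ψd : ℝ → ℝ}

lemma phi_window (hp : p ∈ Set.Ioo (1:ℝ) 2) (ha : 0 < a) (hψ : PsiSol p a ψ ψd)
    {z : ℝ} (hz : z ∈ Set.Ioo (0:ℝ) 1) (h0 : Phid p ψ ψd z = 0) :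
    0 < Phi p ψ z ∧ Phi p ψ z < (p-1) ^ (-p) := by
  have hs : (0:ℝ) < 1 - z := by linarith [hz.2]
  have hkey := key_id hp ha hψ hz
  rw [h0, zero_mul] at hkey
  have hC := Cpos hp ha
  have hpow : (0:ℝ) < (1-z) ^ (2-p) := Real.rpow_pos_of_pos hs _
  have hHw : 0 < Hw p (Phi p ψ z) := by
    have hp0 : (0:ℝ) < p := by linarith [hp.1]
    unfold Ee at hkey
    nlinarith
  exact phi_of_pos_lt hp (phi_nonneg hψ (Set.Ioo_subset_Ico_self hz)) hHw

lemma Ee_hasDerivAt (hp : p ∈ Set.Ioo (1:ℝ) 2) (ha : 0 < a) (hψ : PsiSol p a ψ ψd)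
    {z : ℝ} (hz : z ∈ Set.Ioo (0:ℝ) 1) (hφpos : 0 < Phi p ψ z) :
    HasDerivAt (Ee p a ψ)
      (p * a ^ (2-p) / (p-1) * (-(2-p) * (1-z) ^ (2-p-1))
        - p * ((p-1)⁻¹ * (Phid p ψ ψd z * ((p-1)/p) * (Phi p ψ z) ^ ((p-1)/p - 1))
          - Phid p ψ ψd z)) z := by
  have h1 := (hasDeriv_one_sub_rpow (2-p) hz.2).const_mul (p * a ^ (2-p) / (p-1))
  have hφ := phi_hasDerivAt hψ hz
  have h2 := (hφ.rpow_const (p := (p-1)/p) (Or.inl (ne_of_gt hφpos))).const_mul ((p-1)⁻¹)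
  have h3 := ((h2.sub hφ).const_mul p)
  have h4 := h1.sub h3
  exact h4

lemma crossing (hp : p ∈ Set.Ioo (1:ℝ) 2) (ha : 0 < a) (hψ : PsiSol p a ψ ψd)
    {z : ℝ} (hz : z ∈ Set.Ioo (0:ℝ) 1) (h0 : Phid p ψ ψd z = 0) :
    (∀ᶠ y in 𝓝[>] z, Phid p ψ ψd y < 0) ∧ (∀ᶠ y in 𝓝[<] z, 0 < Phid p ψ ψd y) := by
  have hs : (0:ℝ) < 1 - z := by linarith [hz.2]
  have hφpos := (phi_window hp ha hψ hz h0).1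
  have hE := Ee_hasDerivAt hp ha hψ hz hφpos
  set D := p * a ^ (2-p) / (p-1) * (-(2-p) * (1-z) ^ (2-p-1))
        - p * ((p-1)⁻¹ * (Phid p ψ ψd z * ((p-1)/p) * (Phi p ψ z) ^ ((p-1)/p - 1))
          - Phid p ψ ψd z) with hD
  have hDneg : D < 0 := by
    rw [hD, h0]
    have hC := Cpos hp ha
    have hpow : (0:ℝ) < (1-z) ^ (2-p-1) := Real.rpow_pos_of_pos hs _
    have h2p : (0:ℝ) < 2 - p := by linarith [hp.2]
    have : p * a ^ (2-p) / (p-1) * (-(2-p) * (1-z) ^ (2-p-1))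
        - p * ((p-1)⁻¹ * (0 * ((p-1)/p) * (Phi p ψ z) ^ ((p-1)/p - 1)) - 0)
        = -(p * a ^ (2-p) / (p-1) * ((2-p) * (1-z) ^ (2-p-1))) := by ring
    rw [this]
    have : (0:ℝ) < p * a ^ (2-p) / (p-1) * ((2-p) * (1-z) ^ (2-p-1)) := by positivity
    linarith
  have hEz : Ee p a ψ z = 0 := by
    rw [← key_id hp ha hψ hz, h0, zero_mul]
  have hslope := hasDerivAt_iff_tendsto_slope.mp hE
  have hev : ∀ᶠ y in 𝓝[≠] z, slope (Ee p a ψ) z y < 0 :=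
    hslope.eventually_lt_const hDneg
  constructor
  · have hle : 𝓝[>] z ≤ 𝓝[≠] z := nhdsWithin_mono z (fun y hy => ne_of_gt hy)
    filter_upwards [hev.filter_mono hle, Ioo_mem_nhdsGT hz.2] with y hy1 hy2
    have hyI : y ∈ Set.Ioo (0:ℝ) 1 := ⟨lt_trans hz.1 hy2.1, hy2.2⟩
    rw [slope_def_field, hEz] at hy1
    have hyz : 0 < y - z := by linarith [hy2.1]
    have hEy : Ee p a ψ y < 0 := by
      have h' : Ee p a ψ y / (y - z) < 0 := by simpa using hy1
      rcases div_neg_iff.mp h' with ⟨h, h2⟩ | ⟨h, _⟩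
      · exfalso; linarith
      · exact h
    have hkey := key_id hp ha hψ hyI
    have h1y : (0:ℝ) < 1 - y := by linarith [hyI.2]
    by_contra hcon
    push_neg at hcon
    have hm := mul_nonneg hcon h1y.le
    rw [hkey] at hm
    linarith
  · have hle : 𝓝[<] z ≤ 𝓝[≠] z := nhdsWithin_mono z (fun y hy => ne_of_lt hy)
    filter_upwards [hev.filter_mono hle, Ioo_mem_nhdsLT hz.1] with y hy1 hy2
    have hyI : y ∈ Set.Ioo (0:ℝ) 1 := ⟨hy2.1, lt_trans hy2.2 hz.2⟩
    rw [slope_def_field, hEz] at hy1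
    have hyz : y - z < 0 := by linarith [hy2.2]
    have hEy : 0 < Ee p a ψ y := by
      have h' : Ee p a ψ y / (y - z) < 0 := by simpa using hy1
      rcases div_neg_iff.mp h' with ⟨h, h2⟩ | ⟨h, h2⟩
      · exact h
      · exfalso; linarith
    have hkey := key_id hp ha hψ hyI
    have h1y : (0:ℝ) < 1 - y := by linarith [hyI.2]
    by_contra hcon
    push_neg at hcon
    nlinarith [hkey, hEy, h1y, hcon]

end cross

section order
variable {p a : ℝ} {ψ ψd : ℝ → ℝ}

lemma sign_of_zero (hp : p ∈ Set.Ioo (1:ℝ) 2) (ha : 0 < a) (hψ : PsiSol p a ψ ψd)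
    {ys : ℝ} (hys : ys ∈ Set.Ioo (0:ℝ) 1) (h0 : Phid p ψ ψd ys = 0) :
    ∀ y ∈ Set.Ioo (0:ℝ) 1, y ≠ ys → Phid p ψ ψd y * (y - ys) < 0 := by
  intro y hy hne
  have hcont : ∀ u v : ℝ, 0 < u → v < 1 → ContinuousOn (Phid p ψ ψd) (Set.Icc u v) := by
    intro u v hu hv
    apply (phid_cont hψ).mono
    intro w hw
    exact ⟨le_trans hu.le hw.1, lt_of_le_of_lt hw.2 hv⟩
  -- general contradiction machine
  have main : ∀ u v : ℝ, 0 < u → u < v → v < 1 → Phid p ψ ψd u < 0 → 0 < Phid p ψ ψd v → False := by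
    intro u v hu huv hv hPu hPv
    apply no_upcross huv (hcont u v hu hv) _ hPu hPv
    intro w hw hw0
    exact (crossing hp ha hψ ⟨lt_of_lt_of_le hu hw.1, lt_of_le_of_lt hw.2 hv⟩ hw0).2
  rcases lt_or_gt_of_ne hne with hlt | hgt
  · -- y < ys : show 0 < Phid y
    have : 0 < Phid p ψ ψd y := by
      by_contra hcon
      push_neg at hcon
      obtain ⟨v, hv1, hv2⟩ := ((crossing hp ha hψ hys h0).2.and
        (eventually_of_mem (Ioo_mem_nhdsLT hlt) (fun w hw => hw))).exists
      rcases eq_or_lt_of_le hcon with heq | hltc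
      · obtain ⟨u, hu1, hu2⟩ := ((crossing hp ha hψ hy heq).1.and
          (eventually_of_mem (Ioo_mem_nhdsGT hv2.1) (fun w hw => hw))).exists
        exact main u v (lt_trans hy.1 hu2.1) hu2.2 (lt_trans hv2.2 hys.2) hu1 hv1
      · exact main y v hy.1 hv2.1 (lt_trans hv2.2 hys.2) hltc hv1
    have hyneg : y - ys < 0 := by linarith
    exact mul_neg_of_pos_of_neg this hyneg
  · -- ys < y : show Phid y < 0
    have : Phid p ψ ψd y < 0 := by
      by_contra hcon
      push_neg at hcon
      obtain ⟨u, hu1, hu2⟩ := ((crossing hp ha hψ hys h0).1.and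
        (eventually_of_mem (Ioo_mem_nhdsGT hgt) (fun w hw => hw))).exists
      rcases eq_or_lt_of_le hcon with heq | hltc
      · obtain ⟨v, hv1, hv2⟩ := ((crossing hp ha hψ hy heq.symm).2.and
          (eventually_of_mem (Ioo_mem_nhdsLT hu2.2) (fun w hw => hw))).exists
        exact main u v (lt_trans hys.1 hu2.1) hv2.1 (lt_trans hv2.2 hy.2) hu1 hv1
      · exact main u y (lt_trans hys.1 hu2.1) hu2.2 hy.2 hu1 hltc
    have hypos : 0 < y - ys := by linarith
    exact mul_neg_of_neg_of_pos this hypos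

end order

section limits
variable {p a : ℝ} {ψ ψd : ℝ → ℝ}

lemma hw_contOn {s : Set ℝ} (h : ∀ t ∈ s, t ≠ 0) : ContinuousOn (Hw p) s := by
  show ContinuousOn (fun t => (p-1)⁻¹ * t ^ ((p-1)/p) - t) s
  exact (continuousOn_const.mul (continuousOn_id.rpow_const
    (fun t ht => Or.inl (h t ht)))).sub continuousOn_id

lemma exists_small {C e m : ℝ} (hC : 0 < C) (he : 0 < e) (hm : 0 < m) (w : ℝ) (hw : w < 1) :
    ∃ y, w < y ∧ y < 1 ∧ C * (1-y) ^ e < m := by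
  set x := (m/(2*C)) ^ (e⁻¹) with hx
  have hxpos : 0 < x := Real.rpow_pos_of_pos (by positivity) _
  set r := min ((1-w)/2) x with hr
  have hrpos : 0 < r := lt_min (by linarith) hxpos
  refine ⟨1 - r, ?_, by linarith, ?_⟩
  · have : r ≤ (1-w)/2 := min_le_left _ _
    linarith
  · have h1 : (1 - (1-r)) = r := by ring
    rw [h1]
    have h2 : r ^ e ≤ x ^ e := Real.rpow_le_rpow hrpos.le (min_le_right _ _) he.le
    have h3 : x ^ e = m/(2*C) := Real.rpow_inv_rpow (by positivity) (ne_of_gt he)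
    rw [h3] at h2
    calc C * r ^ e ≤ C * (m/(2*C)) := by
          exact mul_le_mul_of_nonneg_left h2 hC.le
    _ = m/2 := by field_simp
    _ < m := by linarith

lemma tendsto_zero_of_zero (hp : p ∈ Set.Ioo (1:ℝ) 2) (ha : 0 < a) (hψ : PsiSol p a ψ ψd)
    {ys : ℝ} (hys : ys ∈ Set.Ioo (0:ℝ) 1) (h0 : Phid p ψ ψd ys = 0) :
    Tendsto (Phi p ψ) (𝓝[<] (1:ℝ)) (𝓝 0) := by
  have hp1 : (0:ℝ) < p - 1 := by linarith [hp.1]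
  have hp0 : (0:ℝ) < p := by linarith [hp.1]
  have hC := Cpos hp ha
  have hsign := sign_of_zero hp ha hψ hys h0
  have hneg : ∀ y ∈ Set.Ioo ys 1, Phid p ψ ψd y < 0 := by
    intro y hy
    have h := hsign y ⟨lt_trans hys.1 hy.1, hy.2⟩ (ne_of_gt hy.1)
    nlinarith [h, hy.1]
  have hsub : Set.Ico ys 1 ⊆ Set.Ico (0:ℝ) 1 := fun w hw => ⟨le_trans hys.1.le hw.1, hw.2⟩
  have hanti : StrictAntiOn (Phi p ψ) (Set.Ico ys 1) := by
    apply strictAntiOn_of_deriv_neg (convex_Ico ys 1) ((phi_cont hψ).mono hsub)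
    intro x hx
    rw [interior_Ico] at hx
    rw [(phi_hasDerivAt hψ ⟨lt_trans hys.1 hx.1, hx.2⟩).deriv]
    exact hneg x hx
  have hwind := phi_window hp ha hψ hys h0
  -- bound above on [ys,1)
  have hub : ∀ y ∈ Set.Ico ys 1, Phi p ψ y ≤ Phi p ψ ys := by
    intro y hy
    rcases eq_or_lt_of_le hy.1 with h | h
    · rw [← h]
    · exact (hanti ⟨le_refl ys, hys.2⟩ hy h).le
  set L := sInf (Phi p ψ '' Set.Ioo ys 1) with hLdef
  have hmid : ys < (ys + 1)/2 ∧ (ys+1)/2 < 1 := by constructor <;> linarith [hys.2, hys.1]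
  have hne : (Phi p ψ '' Set.Ioo ys 1).Nonempty := ⟨_, ⟨(ys+1)/2, ⟨hmid.1, hmid.2⟩, rfl⟩⟩
  have hbdd : BddBelow (Phi p ψ '' Set.Ioo ys 1) := by
    refine ⟨0, ?_⟩
    rintro _ ⟨w, hw, rfl⟩
    exact phi_nonneg hψ ⟨le_trans hys.1.le hw.1.le, hw.2⟩
  have hL0 : 0 ≤ L := le_csInf hne (by rintro _ ⟨w, hw, rfl⟩; exact phi_nonneg hψ ⟨le_trans hys.1.le hw.1.le, hw.2⟩)
  have hLle : ∀ y ∈ Set.Ioo ys 1, L ≤ Phi p ψ y := fun y hy => csInf_le hbdd ⟨y, hy, rfl⟩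
  have htend : Tendsto (Phi p ψ) (𝓝[<] (1:ℝ)) (𝓝 L) := by
    rw [tendsto_order]
    constructor
    · intro b hb
      filter_upwards [Ioo_mem_nhdsLT hys.2] with y hy
      exact lt_of_lt_of_le hb (hLle y hy)
    · intro b hb
      obtain ⟨_, ⟨y1, hy1, rfl⟩, hy1b⟩ := exists_lt_of_csInf_lt hne hb
      filter_upwards [Ioo_mem_nhdsLT hy1.2] with y hy
      have : Phi p ψ y < Phi p ψ y1 :=
        hanti ⟨hy1.1.le, hy1.2⟩ ⟨le_trans hy1.1.le hy.1.le, hy.2⟩ hy.1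
      linarith
  -- show L = 0
  have hLzero : L = 0 := by
    by_contra hLne
    have hL : 0 < L := lt_of_le_of_ne hL0 (Ne.symm hLne)
    -- Phi y ∈ [L, Phi ys] ⊆ (0, κ) on [ys, 1)
    have hrange : ∀ y ∈ Set.Ico ys 1, Phi p ψ y ∈ Set.Icc L (Phi p ψ ys) := by
      intro y hy
      refine ⟨?_, hub y hy⟩
      rcases eq_or_lt_of_le hy.1 with h | h
      · rw [← h]; exact le_trans (hLle _ ⟨hmid.1, hmid.2⟩) (hub _ ⟨hmid.1.le, hmid.2⟩)
      · exact hLle y ⟨h, hy.2⟩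
    have hLB : L ≤ Phi p ψ ys := (hrange ys ⟨le_refl ys, hys.2⟩).1
    -- min of Hw on Icc L B
    obtain ⟨t0, ht0, ht0min⟩ := isCompact_Icc.exists_isMinOn (Set.nonempty_Icc.2 hLB)
      (hw_contOn (fun t ht => ne_of_gt (lt_of_lt_of_le hL ht.1)))
    set m := Hw p t0 with hm
    have hmpos : 0 < m := hw_pos hp (lt_of_lt_of_le hL ht0.1)
      (lt_of_le_of_lt ht0.2 hwind.2)
    -- choose y0 with C (1-y)^{2-p} ≤ p*m/2 for y ≥ y0
    obtain ⟨y0, hy0l, hy0r, hy0b⟩ := exists_small hC (e := 2-p) (by linarith [hp.2])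
      (by positivity : (0:ℝ) < p*m/2) ys hys.2
    -- on [y0, 1), Phid y ≤ -(p*m/2)/(1-y)
    have hder : ∀ y ∈ Set.Ioo y0 1, Phid p ψ ψd y ≤ -(p*m/2) / (1-y) := by
      intro y hy
      have hyI : y ∈ Set.Ioo (0:ℝ) 1 := ⟨lt_trans (lt_trans hys.1 hy0l) hy.1, hy.2⟩
      have h1y : (0:ℝ) < 1 - y := by linarith [hy.2]
      have hkey := key_id hp ha hψ hyI
      have hmono : (1-y) ^ (2-p) ≤ (1-y0) ^ (2-p) :=
        Real.rpow_le_rpow h1y.le (by linarith [hy.1]) (by linarith [hp.2])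
      have hHm : m ≤ Hw p (Phi p ψ y) := ht0min (hrange y ⟨le_trans hy0l.le hy.1.le, hy.2⟩)
      have hEe : Ee p a ψ y ≤ -(p*m/2) := by
        unfold Ee
        have h1 : p * a ^ (2-p) / (p-1) * (1-y) ^ (2-p) ≤ p*m/2 := by
          calc p * a ^ (2-p) / (p-1) * (1-y) ^ (2-p)
              ≤ p * a ^ (2-p) / (p-1) * (1-y0) ^ (2-p) := by
                exact mul_le_mul_of_nonneg_left hmono hC.le
          _ ≤ p*m/2 := hy0b.le
        nlinarith [hHm, hp0]
      rw [le_div_iff₀ h1y]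
      linarith [hkey, hEe]
    -- G := Phi - (p*m/2) * log(1-y) is antitone on [y0,1)
    set c := p*m/2 with hc
    have hcpos : 0 < c := by positivity
    set G := fun y => Phi p ψ y - c * Real.log (1-y) with hG
    have hGanti : AntitoneOn G (Set.Ico y0 1) := by
      have hGd : ∀ x ∈ Set.Ioo y0 1, HasDerivAt G (Phid p ψ ψd x + c * (1-x)⁻¹) x := by
        intro x hx
        have hxI : x ∈ Set.Ioo (0:ℝ) 1 := ⟨lt_trans (lt_trans hys.1 hy0l) hx.1, hx.2⟩
        have h1x : (0:ℝ) < 1 - x := by linarith [hx.2]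
        have hlog : HasDerivAt (fun y : ℝ => Real.log (1-y)) (-(1-x)⁻¹) x := by
          have hl : HasDerivAt (fun y : ℝ => 1 - y) (-1) x := (hasDerivAt_id x).const_sub 1
          have := (Real.hasDerivAt_log (ne_of_gt h1x)).comp x hl
          exact this.congr_deriv (by ring)
        have := (phi_hasDerivAt hψ hxI).sub (hlog.const_mul c)
        exact this.congr_deriv (by ring)
      apply antitoneOn_of_deriv_nonpos (convex_Ico y0 1)
      · have hsub2 : Set.Ico y0 1 ⊆ Set.Ico (0:ℝ) 1 :=
          fun w hw => ⟨le_trans (le_trans hys.1.le hy0l.le) hw.1, hw.2⟩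
        apply ContinuousOn.sub ((phi_cont hψ).mono hsub2)
        apply ContinuousOn.mul continuousOn_const
        apply ContinuousOn.log (continuousOn_const.sub continuousOn_id)
        intro x hx
        have h1x : (0:ℝ) < 1 - x := by linarith [hx.2]
        simpa using h1x.ne'
      · intro x hx
        rw [interior_Ico] at hx
        exact (hGd x hx).differentiableAt.differentiableWithinAt
      · intro x hx
        rw [interior_Ico] at hx
        rw [(hGd x hx).deriv]
        have h1x : (0:ℝ) < 1 - x := by linarith [hx.2]
        have hd := hder x hx
        have heq2 : -c/(1-x) = -(c * (1-x)⁻¹) := by field_simp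
        rw [hc] at heq2 hd ⊢
        linarith [hd, heq2]
    -- final contradiction
    set δ := min ((1-y0)/2) (Real.exp (-(G y0 + 1)/c)) with hδ
    have hδpos : 0 < δ := lt_min (by linarith) (Real.exp_pos _)
    set y1 := 1 - δ with hy1
    have hy01 : y0 < y1 := by
      have : δ ≤ (1-y0)/2 := min_le_left _ _
      rw [hy1]; linarith
    have hy11 : y1 < 1 := by rw [hy1]; linarith
    have hG1 : G y1 ≤ G y0 := hGanti ⟨le_refl y0, hy0r⟩ ⟨hy01.le, hy11⟩ hy01.le
    have hlogb : Real.log (1-y1) ≤ -(G y0 + 1)/c := by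
      have h1 : (1:ℝ) - y1 = δ := by rw [hy1]; ring
      rw [h1]
      calc Real.log δ ≤ Real.log (Real.exp (-(G y0 + 1)/c)) := by
            apply Real.log_le_log hδpos (min_le_right _ _)
      _ = -(G y0 + 1)/c := Real.log_exp _
    have hφy1 : Phi p ψ y1 = G y1 + c * Real.log (1-y1) := by rw [hG]; ring
    have hcne : c ≠ 0 := ne_of_gt hcpos
    have hbound : Phi p ψ y1 ≤ -1 := by
      rw [hφy1]
      have h2 : c * Real.log (1-y1) ≤ c * (-(G y0 + 1)/c) :=
        mul_le_mul_of_nonneg_left hlogb hcpos.le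
      have h3 : c * (-(G y0 + 1)/c) = -(G y0 + 1) := by
        field_simp
      have h4 : c * Real.log (1-y1) ≤ -(G y0 + 1) := le_of_le_of_eq h2 h3
      linarith [hG1, h4]
    have hφnn : 0 ≤ Phi p ψ y1 := phi_nonneg hψ
      ⟨by linarith [hys.1, hy0l, hy01], hy11⟩
    linarith
  rw [hLzero] at htend
  exact htend

lemma phi_lt_kappa_of_tendsto (hp : p ∈ Set.Ioo (1:ℝ) 2) (ha : 0 < a) (hψ : PsiSol p a ψ ψd)
    (hi : Tendsto (Phi p ψ) (𝓝[<] (1:ℝ)) (𝓝 0)) :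
    ∀ y ∈ Set.Ico (0:ℝ) 1, Phi p ψ y < (p-1) ^ (-p) := by
  set κ := (p-1) ^ (-p) with hκdef
  have hκ : 0 < κ := kappa_pos hp
  intro y0 hy0
  by_contra hcon
  push_neg at hcon
  have hy00 : 0 < y0 := by
    rcases eq_or_lt_of_le hy0.1 with h | h
    · exfalso; rw [← h, phi_zero hψ] at hcon; linarith
    · exact h
  -- from tendsto, get y1 > y0 with Phi y1 < κ
  have hev : ∀ᶠ y in 𝓝[<] (1:ℝ), Phi p ψ y < κ := hi.eventually_lt_const hκ
  obtain ⟨y1, hy1a, hy1b⟩ := ((eventually_of_mem (Ioo_mem_nhdsLT hy0.2)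
    (fun w hw => hw)).and hev).exists
  -- T and its sup
  set T := {w ∈ Set.Icc y0 y1 | κ ≤ Phi p ψ w} with hT
  have hsub : Set.Icc y0 y1 ⊆ Set.Ico (0:ℝ) 1 :=
    fun w hw => ⟨le_trans hy00.le hw.1, lt_of_le_of_lt hw.2 hy1a.2⟩
  have hTclosed : IsClosed T := by
    have : T = Set.Icc y0 y1 ∩ (Phi p ψ) ⁻¹' (Set.Ici κ) := rfl
    rw [this]
    exact ContinuousOn.preimage_isClosed_of_isClosed ((phi_cont hψ).mono hsub)
      isClosed_Icc isClosed_Ici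
  have hTne : T.Nonempty := ⟨y0, ⟨le_refl y0, hy1a.1.le⟩, hcon⟩
  have hTbdd : BddAbove T := ⟨y1, fun w hw => hw.1.2⟩
  set z := sSup T with hz
  have hzT : z ∈ T := hTclosed.csSup_mem hTne hTbdd
  have hzy1 : z < y1 := by
    rcases eq_or_lt_of_le hzT.1.2 with h | h
    · exfalso; rw [h] at hzT; linarith [hzT.2]
    · exact h
  have hlt : ∀ w ∈ Set.Ioc z y1, Phi p ψ w < κ := by
    intro w hw
    by_contra hc
    have hwT : w ∈ T := ⟨⟨le_trans hzT.1.1 hw.1.le, hw.2⟩, not_lt.1 hc⟩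
    exact absurd (le_csSup hTbdd hwT) (not_le.2 hw.1)
  have hzI : z ∈ Set.Ioo (0:ℝ) 1 :=
    ⟨lt_of_lt_of_le hy00 hzT.1.1, lt_trans hzy1 hy1a.2⟩
  have hφz : Phi p ψ z = κ := by
    refine le_antisymm ?_ hzT.2
    have hcw : Tendsto (Phi p ψ) (𝓝[Set.Ioc z y1] z) (𝓝 (Phi p ψ z)) := by
      apply ((phi_cont hψ) z (hsub ⟨hzT.1.1, hzT.1.2⟩)).mono
      intro w hw
      exact hsub ⟨le_trans hzT.1.1 hw.1.le, hw.2⟩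
    have hne : (𝓝[Set.Ioc z y1] z).NeBot := by
      apply mem_closure_iff_nhdsWithin_neBot.mp
      rw [closure_Ioc (ne_of_lt hzy1)]
      exact ⟨le_refl z, hzy1.le⟩
    exact le_of_tendsto hcw (eventually_mem_nhdsWithin.mono (fun w hw => (hlt w hw).le))
  -- Phid z > 0
  have hs : (0:ℝ) < 1 - z := by linarith [hzI.2]
  have hEz : Ee p a ψ z = p * a ^ (2-p) / (p-1) * (1-z) ^ (2-p) := by
    unfold Ee
    rw [hφz, hκdef, hw_kappa hp]
    ring
  have hEpos : 0 < Ee p a ψ z := by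
    rw [hEz]
    have := Cpos hp ha
    have : (0:ℝ) < (1-z)^(2-p) := Real.rpow_pos_of_pos hs _
    positivity
  have hkey := key_id hp ha hψ hzI
  have hPdz : 0 < Phid p ψ ψd z := by nlinarith [hkey, hEpos, hs]
  -- slope argument : Phi exceeds κ just right of z
  have hslope := hasDerivAt_iff_tendsto_slope.mp (phi_hasDerivAt hψ hzI)
  have hev2 : ∀ᶠ w in 𝓝[≠] z, 0 < slope (Phi p ψ) z w :=
    hslope.eventually_const_lt hPdz
  have hle : 𝓝[>] z ≤ 𝓝[≠] z := nhdsWithin_mono z (fun w hw => ne_of_gt hw)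
  obtain ⟨w, hw1, hw2⟩ := ((hev2.filter_mono hle).and
    (eventually_of_mem (Ioo_mem_nhdsGT hzy1) (fun w hw => hw))).exists
  rw [slope_def_field, hφz] at hw1
  have hwz : 0 < w - z := by linarith [hw2.1]
  have : κ < Phi p ψ w := by
    rcases div_pos_iff.mp hw1 with ⟨h, _⟩ | ⟨_, h2⟩
    · linarith
    · exfalso; linarith
  exact absurd this (not_lt.2 (hlt w ⟨hw2.1, hw2.2.le⟩).le)

lemma i_to_ii (hp : p ∈ Set.Ioo (1:ℝ) 2) (ha : 0 < a) (hψ : PsiSol p a ψ ψd)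
    (hi : Tendsto (Phi p ψ) (𝓝[<] (1:ℝ)) (𝓝 0)) :
    ∃ c : ℝ, c < (p-1) ^ (-p) ∧ ∀ y ∈ Set.Ico (0:ℝ) 1, Phi p ψ y ≤ c := by
  set κ := (p-1) ^ (-p) with hκdef
  have hκ : 0 < κ := kappa_pos hp
  have hstep1 := phi_lt_kappa_of_tendsto hp ha hψ hi
  have hev : ∀ᶠ y in 𝓝[<] (1:ℝ), Phi p ψ y < κ/2 := hi.eventually_lt_const (by linarith)
  obtain ⟨l, hl, hsub⟩ := mem_nhdsLT_iff_exists_Ioo_subset.mp hev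
  set y2 := max l (1/2) with hy2
  have hy21 : y2 < 1 := by
    apply max_lt hl (by norm_num)
  have hy20 : (0:ℝ) ≤ y2 := le_trans (by norm_num) (le_max_right _ _)
  have htail : ∀ y, y2 < y → y < 1 → Phi p ψ y < κ/2 := by
    intro y hya hyb
    exact hsub ⟨lt_of_le_of_lt (le_max_left _ _) hya, hyb⟩
  obtain ⟨w, hw, hwmax⟩ := isCompact_Icc.exists_isMaxOn (Set.nonempty_Icc.2 hy20)
    ((phi_cont hψ).mono (fun u hu => ⟨hu.1, lt_of_le_of_lt hu.2 hy21⟩))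
  set M := Phi p ψ w with hM
  have hMκ : M < κ := hstep1 w ⟨hw.1, lt_of_le_of_lt hw.2 hy21⟩
  refine ⟨max M (κ/2), max_lt hMκ (by linarith), ?_⟩
  intro y hy
  rcases le_or_gt y y2 with h | h
  · exact le_trans (hwmax ⟨hy.1, h⟩) (le_max_left _ _)
  · exact le_trans (htail y h hy.2).le (le_max_right _ _)

lemma ii_to_iii (hp : p ∈ Set.Ioo (1:ℝ) 2) (ha : 0 < a) (hψ : PsiSol p a ψ ψd)
    (hii : ∃ c : ℝ, c < (p-1) ^ (-p) ∧ ∀ y ∈ Set.Ico (0:ℝ) 1, Phi p ψ y ≤ c) :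
    ∃ y ∈ Set.Ioo (0:ℝ) 1, Phid p ψ ψd y = 0 := by
  obtain ⟨c, hcκ, hc⟩ := hii
  by_contra hcon
  push_neg at hcon
  have hC := Cpos hp ha
  have hp0 : (0:ℝ) < p := by linarith [hp.1]
  -- Phid > 0 on (0,1)
  have hpos : ∀ y ∈ Set.Ioo (0:ℝ) 1, 0 < Phid p ψ ψd y := by
    intro y hy
    rcases lt_or_gt_of_ne (hcon y hy) with h | h
    · exfalso
      -- IVT between 0 and y
      have hicc : Set.Icc (0:ℝ) y ⊆ Set.Ico (0:ℝ) 1 := fun w hw => ⟨hw.1, lt_of_le_of_lt hw.2 hy.2⟩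
      have hcont := (phid_cont hψ).mono hicc
      have h0 : Phid p ψ ψd 0 = p * a ^ (2-p) / (p-1) := phid_zero_val hp ha hψ
      have hmem : (0:ℝ) ∈ Set.Icc (Phid p ψ ψd y) (Phid p ψ ψd 0) := by
        constructor
        · linarith
        · rw [h0]; linarith
      obtain ⟨w, hw, hw0⟩ := intermediate_value_Icc' hy.1.le hcont hmem
      have hwne : w ≠ 0 := by
        intro hweq
        rw [hweq] at hw0
        rw [hw0] at h0
        linarith
      exact hcon w ⟨lt_of_le_of_ne hw.1 (Ne.symm hwne), lt_of_le_of_lt hw.2 hy.2⟩ hw0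
    · exact h
  -- Phi strictly monotone on [0,1)
  have hmono : StrictMonoOn (Phi p ψ) (Set.Ico 0 1) := by
    apply strictMonoOn_of_deriv_pos (convex_Ico 0 1) (phi_cont hψ)
    intro x hx
    rw [interior_Ico] at hx
    rw [(phi_hasDerivAt hψ hx).deriv]
    exact hpos x hx
  have hhalf : (1/2 : ℝ) ∈ Set.Ico (0:ℝ) 1 := by norm_num
  have hzero : (0:ℝ) ∈ Set.Ico (0:ℝ) 1 := by norm_num
  have hℓ : 0 < Phi p ψ (1/2) := by
    have := hmono hzero hhalf (by norm_num)
    rwa [phi_zero hψ] at this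
  have hℓc : Phi p ψ (1/2) ≤ c := hc _ hhalf
  -- min of Hw on [ℓ, c]
  obtain ⟨t0, ht0, ht0min⟩ := isCompact_Icc.exists_isMinOn (Set.nonempty_Icc.2 hℓc)
    (hw_contOn (fun t ht => ne_of_gt (lt_of_lt_of_le hℓ ht.1)))
  have hmpos : 0 < Hw p t0 := hw_pos hp (lt_of_lt_of_le hℓ ht0.1)
    (lt_of_le_of_lt ht0.2 hcκ)
  set m := Hw p t0 with hm
  -- find y near 1 with Ee < 0
  obtain ⟨y, hyl, hyr, hyb⟩ := exists_small hC (e := 2-p) (by linarith [hp.2])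
    (by positivity : (0:ℝ) < p*m) (1/2) (by norm_num)
  have hyI : y ∈ Set.Ioo (0:ℝ) 1 := ⟨by linarith, hyr⟩
  have hφy : Phi p ψ y ∈ Set.Icc (Phi p ψ (1/2)) c := by
    constructor
    · exact (hmono hhalf ⟨by linarith, hyr⟩ hyl).le
    · exact hc y ⟨by linarith, hyr⟩
  have hHy : m ≤ Hw p (Phi p ψ y) := ht0min hφy
  have hEy : Ee p a ψ y < 0 := by
    unfold Ee
    nlinarith [hyb, hHy, hp0]
  have hkey := key_id hp ha hψ hyI
  have h1y : (0:ℝ) < 1 - y := by linarith [hyr]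
  have : Phid p ψ ψd y < 0 := by nlinarith [hkey, hEy, h1y]
  exact absurd this (not_lt.2 (hpos y hyI).le)


/-- With `φ(y) := ψ(y)(1-y)^{-p}` (whose derivative on `(0,1)` is
`φ'(y) = ψ'(y)(1-y)^{-p} + p ψ(y)(1-y)^{-(p+1)}`) and `κ := (p-1)^{-p}`, the following are
equivalent: (i) `φ(y) → 0` as `y → 1`; (ii) `sup_{[0,1)} φ < κ`; (iii) `φ'` vanishes at
least once in `(0,1)`; (iv) there is `Y_a ∈ (0,1)` with `φ'(Y_a) = 0` and
`φ'(y)(y-Y_a) < 0` for `y ∈ (0,1) \ {Y_a}`. -/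
theorem stmt11 (p a : ℝ) (hp : p ∈ Set.Ioo (1:ℝ) 2) (ha : 0 < a)
    (f fd gd ψ ψd : ℝ → ℝ) (hf : IsSol p a f fd gd) (hrel : PsiRel p a f fd ψ)
    (hψ : PsiSol p a ψ ψd) :
    (Tendsto (fun y => ψ y * (1-y) ^ (-p)) (𝓝[<] (1:ℝ)) (𝓝 0) ↔
      ∃ c : ℝ, c < (p-1) ^ (-p) ∧ ∀ y ∈ Set.Ico (0:ℝ) 1, ψ y * (1-y) ^ (-p) ≤ c) ∧
    (Tendsto (fun y => ψ y * (1-y) ^ (-p)) (𝓝[<] (1:ℝ)) (𝓝 0) ↔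
      ∃ y ∈ Set.Ioo (0:ℝ) 1, ψd y * (1-y) ^ (-p) + p * ψ y * (1-y) ^ (-(p+1)) = 0) ∧
    (Tendsto (fun y => ψ y * (1-y) ^ (-p)) (𝓝[<] (1:ℝ)) (𝓝 0) ↔
      ∃ Ya ∈ Set.Ioo (0:ℝ) 1,
        ψd Ya * (1-Ya) ^ (-p) + p * ψ Ya * (1-Ya) ^ (-(p+1)) = 0 ∧
        ∀ y ∈ Set.Ioo (0:ℝ) 1, y ≠ Ya →
          (ψd y * (1-y) ^ (-p) + p * ψ y * (1-y) ^ (-(p+1))) * (y - Ya) < 0) := by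
  have main_i : (∃ y ∈ Set.Ioo (0:ℝ) 1, Phid p ψ ψd y = 0) →
      Tendsto (Phi p ψ) (𝓝[<] (1:ℝ)) (𝓝 0) := by
    rintro ⟨ys, hys, h0⟩
    exact tendsto_zero_of_zero hp ha hψ hys h0
  refine ⟨⟨fun hi => i_to_ii hp ha hψ hi, fun hii => main_i (ii_to_iii hp ha hψ hii)⟩,
    ⟨fun hi => ii_to_iii hp ha hψ (i_to_ii hp ha hψ hi), fun hiii => main_i hiii⟩,
    ⟨fun hi => ?_, fun hiv => ?_⟩⟩
  · obtain ⟨ys, hys, h0⟩ := ii_to_iii hp ha hψ (i_to_ii hp ha hψ hi)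
    exact ⟨ys, hys, h0, fun y hy hne => sign_of_zero hp ha hψ hys h0 y hy hne⟩
  · obtain ⟨Ya, hYa, h0, _⟩ := hiv
    exact main_i ⟨Ya, hYa, h0⟩
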